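/- Let (V,h) be a real quadratic space of dimension d = p + q and signature (p,q) with p − q ≡ 1 (mod 8), set k = (d−1)/2, let (Σ,γ) be an irreducible real Clifford module over Cl(V,h), and let (e¹,…,e^d) be an orthonormal basis of (V,h). Then each γ(eⁱ) is invertible in End(Σ), with inverse h(eⁱ)·γ(eⁱ), and every endomorphism E ∈ End(Σ) admits the expansion E = 2^{−k}·( Tr(E)·id_Σ + Σ_{m=1}^{k} Σ_{1 ≤ i₁ < ⋯ < i_m ≤ d} Tr( γ(e^{i_m})^{−1}∘⋯∘γ(e^{i₁})^{−1}∘E ) · γ(e^{i₁})∘⋯∘γ(e^{i_m}) ). -/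

import Mathlib

namespace GammaProductsAux

variable {d : ℕ} {A : Type*} [Ring A] [Algebra ℝ A]

def P (g : Fin d → A) (l : List (Fin d)) : A := (l.map g).prod

def G (g : Fin d → A) (s : Finset (Fin d)) : A := P g (s.sort (· ≤ ·))

structure Rel (g : Fin d → A) (ε : Fin d → ℝ) : Prop where
  sq : ∀ i, g i * g i = ε i • (1 : A)
  unit : ∀ i, ε i * ε i = 1
  anti : ∀ i j : Fin d, i ≠ j → g i * g j = -(g j * g i)

variable {g : Fin d → A} {ε : Fin d → ℝ}

@[simp] lemma P_nil (g : Fin d → A) : P g [] = 1 := rfl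

@[simp] lemma P_cons (g : Fin d → A) (i : Fin d) (l : List (Fin d)) :
    P g (i :: l) = g i * P g l := by simp [P]

@[simp] lemma G_empty (g : Fin d → A) : G g ∅ = 1 := by simp [G, P]

lemma symmDiff_singleton_not_mem {s : Finset (Fin d)} {i : Fin d} (h : i ∉ s) :
    symmDiff s {i} = insert i s := by
  ext j
  simp only [Finset.mem_symmDiff, Finset.mem_singleton, Finset.mem_insert]
  by_cases hj : j = i <;> subst_vars <;> tauto

lemma symmDiff_singleton_mem {s : Finset (Fin d)} {i : Fin d} (h : i ∈ s) :
    symmDiff s {i} = s.erase i := by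
  ext j
  simp only [Finset.mem_symmDiff, Finset.mem_singleton, Finset.mem_erase]
  by_cases hj : j = i <;> subst_vars <;> tauto

lemma P_sorted_eq_G {m : List (Fin d)} (hm : m.Pairwise (· < ·)) :
    P g m = G g m.toFinset := by
  rw [G, (List.toFinset_sort (· ≤ ·) hm.nodup).2 (hm.imp le_of_lt)]

lemma mul_P_sorted (hR : Rel g ε) :
    ∀ (l : List (Fin d)), l.Pairwise (· < ·) → ∀ i : Fin d,
      ∃ (c : ℝ) (m : List (Fin d)), c * c = 1 ∧ m.Pairwise (· < ·) ∧
        m.toFinset = symmDiff l.toFinset {i} ∧ g i * P g l = c • P g m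
  | [], _, i => ⟨1, [i], by norm_num, List.pairwise_singleton _ _, by
      simp [symmDiff_singleton_not_mem], by simp⟩
  | a :: l, hl, i => by
    have hl' : l.Pairwise (· < ·) := hl.of_cons
    have hal : ∀ b ∈ l, a < b := fun b hb => List.rel_of_pairwise_cons hl hb
    rcases lt_trichotomy i a with hia | hieq | hia
    · refine ⟨1, i :: a :: l, by norm_num, ?_, ?_, by simp⟩
      · refine List.pairwise_cons.2 ⟨?_, hl⟩
        intro b hb
        rcases List.mem_cons.1 hb with rfl | hb
        · exact hia
        · exact hia.trans (hal b hb)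
      · rw [symmDiff_singleton_not_mem, List.toFinset_cons]
        simp only [List.toFinset_cons, Finset.mem_insert, List.mem_toFinset]
        rintro (rfl | hi)
        · exact absurd rfl hia.ne
        · exact absurd (hal i hi) (lt_asymm hia)
    · subst hieq
      have ha : i ∉ l := fun hmem => lt_irrefl i (hal i hmem)
      refine ⟨ε i, l, hR.unit i, hl', ?_, ?_⟩
      · rw [List.toFinset_cons, symmDiff_singleton_mem (Finset.mem_insert_self i _),
          Finset.erase_insert (by simpa using ha)]
      · rw [P_cons, ← mul_assoc, hR.sq i, smul_mul_assoc, one_mul]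
    · have ha : a ∉ l := fun hmem => lt_irrefl a (hal a hmem)
      obtain ⟨c, m, hc, hm, hfin, heq⟩ := mul_P_sorted hR l hl' i
      have ham : ∀ b ∈ m, a < b := by
        intro b hb
        have : b ∈ symmDiff l.toFinset {i} := hfin ▸ List.mem_toFinset.2 hb
        rw [Finset.mem_symmDiff] at this
        rcases this with ⟨hbl, _⟩ | ⟨hbi, _⟩
        · exact hal b (List.mem_toFinset.1 hbl)
        · exact (Finset.mem_singleton.1 hbi) ▸ hia
      refine ⟨-c, a :: m, by rw [neg_mul_neg]; exact hc, List.pairwise_cons.2 ⟨ham, hm⟩, ?_, ?_⟩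
      · have hanotin : a ∉ symmDiff l.toFinset {i} := by
          rw [Finset.mem_symmDiff]
          rintro (⟨hla, _⟩ | ⟨hai, _⟩)
          · exact ha (List.mem_toFinset.1 hla)
          · exact hia.ne (Finset.mem_singleton.1 hai)
        have hane : a ≠ i := hia.ne
        have hanl : a ∉ l.toFinset := by simpa using ha
        have h1 : symmDiff (insert a l.toFinset) {i} = insert a (symmDiff l.toFinset {i}) := by
          ext j
          simp only [Finset.mem_symmDiff, Finset.mem_insert, Finset.mem_singleton]
          by_cases hj : j = a <;> by_cases hj' : j = i <;> subst_vars <;> tauto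
        rw [List.toFinset_cons, List.toFinset_cons, h1, hfin]
      · rw [P_cons, P_cons, ← mul_assoc, hR.anti i a hia.ne', neg_mul, mul_assoc, heq,
          mul_smul_comm, neg_smul, ← neg_smul]



lemma mul_G (hR : Rel g ε) (i : Fin d) (u : Finset (Fin d)) :
    ∃ c : ℝ, c * c = 1 ∧ g i * G g u = c • G g (symmDiff u {i}) := by
  obtain ⟨c, m, hc, hm, hfin, heq⟩ := mul_P_sorted hR (u.sort (· ≤ ·)) (Finset.sortedLT_sort u).pairwise i
  refine ⟨c, hc, ?_⟩
  rw [show G g u = P g (u.sort (· ≤ ·)) from rfl, heq, P_sorted_eq_G hm, hfin,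
    Finset.sort_toFinset]

lemma P_mul_G (hR : Rel g ε) (l : List (Fin d)) (u : Finset (Fin d)) :
    ∃ c : ℝ, c * c = 1 ∧
      P g l * G g u = c • G g (List.foldr (fun i w => symmDiff w {i}) u l) := by
  induction l with
  | nil => exact ⟨1, by norm_num, by simp⟩
  | cons a l ih =>
    obtain ⟨c, hc, hcl⟩ := ih
    obtain ⟨c', hc', h'⟩ := mul_G hR a (List.foldr (fun i w => symmDiff w {i}) u l)
    refine ⟨c * c', by rw [show c * c' * (c * c') = (c * c) * (c' * c') by ring, hc, hc', mul_one],
      ?_⟩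
    rw [P_cons, mul_assoc, hcl, mul_smul_comm, h', smul_smul, List.foldr_cons]

lemma foldr_symmDiff (u : Finset (Fin d)) :
    ∀ l : List (Fin d), l.Nodup →
      List.foldr (fun i w => symmDiff w {i}) u l = symmDiff u l.toFinset := by
  intro l
  induction l with
  | nil => simp [← Finset.bot_eq_empty, symmDiff_bot]
  | cons a l ih =>
    intro hnd
    have ha : a ∉ l.toFinset := by simpa using hnd.notMem
    rw [List.foldr_cons, ih hnd.of_cons, List.toFinset_cons,
      show insert a l.toFinset = symmDiff l.toFinset {a} from
        (symmDiff_singleton_not_mem ha).symm, ← symmDiff_assoc]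

lemma P_smul (g : Fin d → A) (ε : Fin d → ℝ) (l : List (Fin d)) :
    (l.map fun i => ε i • g i).prod = (l.map ε).prod • P g l := by
  induction l with
  | nil => simp
  | cons a l ih =>
    rw [List.map_cons, List.prod_cons, ih, List.map_cons, List.prod_cons, P_cons,
      smul_mul_assoc, mul_smul_comm, smul_smul]

lemma prod_eps_sq (hR : Rel g ε) (l : List (Fin d)) :
    (l.map ε).prod * (l.map ε).prod = 1 := by
  induction l with
  | nil => simp
  | cons a l ih =>
    rw [List.map_cons, List.prod_cons,
      show ε a * (l.map ε).prod * (ε a * (l.map ε).prod)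
        = (ε a * ε a) * ((l.map ε).prod * (l.map ε).prod) by ring, hR.unit, ih, mul_one]

/-- The reversed product of inverses. -/
def G' (g : Fin d → A) (ε : Fin d → ℝ) (s : Finset (Fin d)) : A :=
  ((s.sort (· ≤ ·)).reverse.map fun i => ε i • g i).prod

lemma P'_mul_P (hR : Rel g ε) : ∀ l : List (Fin d),
    (l.reverse.map fun i => ε i • g i).prod * P g l = 1 ∧
    P g l * (l.reverse.map fun i => ε i • g i).prod = 1 := by
  intro l
  induction l with
  | nil => simp
  | cons a l ih =>
    have hrev : ((a :: l).reverse.map fun i => ε i • g i).prod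
        = (l.reverse.map fun i => ε i • g i).prod * (ε a • g a) := by
      rw [List.reverse_cons, List.map_append, List.prod_append]
      simp
    have hkey : (ε a • g a) * g a = 1 := by
      rw [smul_mul_assoc, hR.sq, smul_smul, hR.unit, one_smul]
    have hkey' : g a * (ε a • g a) = 1 := by
      rw [mul_smul_comm, hR.sq, smul_smul, hR.unit, one_smul]
    constructor
    · rw [hrev, P_cons, mul_assoc, ← mul_assoc (ε a • g a), hkey, one_mul, ih.1]
    · rw [hrev, P_cons, mul_assoc, ← mul_assoc (P g l), ih.2, one_mul, hkey']

lemma G'_mul_G_self (hR : Rel g ε) (s : Finset (Fin d)) : G' g ε s * G g s = 1 :=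
  (P'_mul_P hR (s.sort (· ≤ ·))).1

lemma G'_mul_G (hR : Rel g ε) (t s : Finset (Fin d)) :
    ∃ c : ℝ, c * c = 1 ∧ G' g ε t * G g s = c • G g (symmDiff s t) := by
  set l := (t.sort (· ≤ ·)).reverse with hldef
  have hln : l.Nodup := by
    rw [hldef, List.nodup_reverse]; exact t.sort_nodup _
  have hlt : l.toFinset = t := by
    rw [hldef, List.toFinset_reverse, Finset.sort_toFinset]
  obtain ⟨c, hc, hPG⟩ := P_mul_G hR l s
  refine ⟨(l.map ε).prod * c, ?_, ?_⟩
  · rw [show (l.map ε).prod * c * ((l.map ε).prod * c)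
      = ((l.map ε).prod * (l.map ε).prod) * (c * c) by ring, prod_eps_sq hR, hc, mul_one]
  · rw [G', ← hldef, P_smul, smul_mul_assoc, hPG, foldr_symmDiff _ _ hln, hlt, smul_smul]

lemma comm_P (hR : Rel g ε) (j : Fin d) : ∀ l : List (Fin d),
    g j * P g l = ((-1 : ℝ) ^ (l.countP (fun a => decide (a ≠ j)))) • (P g l * g j) := by
  intro l
  induction l with
  | nil => simp
  | cons a l ih =>
    rw [P_cons]
    by_cases haj : a = j
    · subst haj
      conv_lhs => rw [ih]
      rw [mul_smul_comm, ← mul_assoc, List.countP_cons]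
      norm_num
    · have h1 : g j * g a = -(g a * g j) := hR.anti j a (Ne.symm haj)
      have hd : (decide (a ≠ j)) = true := by simp [haj]
      rw [← mul_assoc, h1, neg_mul, mul_assoc, ih, mul_smul_comm, ← neg_smul,
        List.countP_cons, hd, ← mul_assoc]
      congr 1
      simp [pow_succ]

section Trace

variable {S : Type*} [AddCommGroup S] [Module ℝ S] [FiniteDimensional ℝ S]
variable {g : Fin d → Module.End ℝ S} {ε : Fin d → ℝ}

lemma countP_sort (u : Finset (Fin d)) (j : Fin d) :
    (u.sort (· ≤ ·)).countP (fun a => decide (a ≠ j)) = (u.erase j).card := by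
  rw [List.countP_eq_length_filter]
  have hnd : ((u.sort (· ≤ ·)).filter (fun a => decide (a ≠ j))).Nodup :=
    (u.sort_nodup _).filter _
  rw [← List.toFinset_card_of_nodup hnd, List.toFinset_filter, Finset.sort_toFinset]
  congr 1
  ext a
  simp [Finset.mem_erase, and_comm]

lemma trace_G_eq_zero (hR : Rel g ε) {u : Finset (Fin d)}
    (hne : u ≠ ∅) (hnu : u ≠ Finset.univ) :
    LinearMap.trace ℝ S (G g u) = 0 := by
  obtain ⟨j, hj⟩ : ∃ j : Fin d, Odd ((u.sort (· ≤ ·)).countP (fun a => decide (a ≠ j))) := by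
    rcases Nat.even_or_odd u.card with hev | hod
    · obtain ⟨j, hj⟩ := Finset.nonempty_iff_ne_empty.2 hne
      refine ⟨j, ?_⟩
      rw [countP_sort, Finset.card_erase_of_mem hj]
      have h1 : 1 ≤ u.card := Finset.card_pos.2 ⟨j, hj⟩
      rw [Nat.odd_iff]
      rw [Nat.even_iff] at hev
      omega
    · obtain ⟨j, hj⟩ : ∃ j, j ∉ u := by
        by_contra hall
        push_neg at hall
        exact hnu (Finset.eq_univ_iff_forall.2 hall)
      refine ⟨j, ?_⟩
      rw [countP_sort, Finset.erase_eq_of_notMem hj]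
      exact hod
  have hsign : g j * G g u = (-1 : ℝ) • (G g u * g j) := by
    have hcp := comm_P hR j (u.sort (· ≤ ·))
    rw [show P g (u.sort (· ≤ ·)) = G g u from rfl] at hcp
    rw [hcp, Odd.neg_one_pow hj]
  have hinv : (ε j • g j) * g j = 1 := by
    rw [smul_mul_assoc, hR.sq, smul_smul, hR.unit, one_smul]
  have hinv' : g j * (ε j • g j) = 1 := by
    rw [mul_smul_comm, hR.sq, smul_smul, hR.unit, one_smul]
  have hGu : G g u = (-1 : ℝ) • ((ε j • g j) * (G g u * g j)) := by
    calc G g u = ((ε j • g j) * g j) * G g u := by rw [hinv, one_mul]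
    _ = (ε j • g j) * (g j * G g u) := by rw [mul_assoc]
    _ = (ε j • g j) * ((-1 : ℝ) • (G g u * g j)) := by rw [hsign]
    _ = (-1 : ℝ) • ((ε j • g j) * (G g u * g j)) := by rw [mul_smul_comm]
  have htr : LinearMap.trace ℝ S ((ε j • g j) * (G g u * g j))
      = LinearMap.trace ℝ S (G g u) := by
    rw [LinearMap.trace_mul_comm, mul_assoc, hinv', mul_one]
  have hfin := congrArg (LinearMap.trace ℝ S) hGu
  rw [map_smul, htr, smul_eq_mul] at hfin
  linarith

lemma expansion {k : ℕ} (hR : Rel g ε) (hd : d = 2 * k + 1)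
    (hS : Module.finrank ℝ S = 2 ^ k) (E : Module.End ℝ S) :
    E = (2 ^ k : ℝ)⁻¹ •
      ((LinearMap.trace ℝ S E) • (1 : Module.End ℝ S)
        + ∑ s ∈ Finset.univ.filter (fun s : Finset (Fin d) => 1 ≤ s.card ∧ s.card ≤ k),
          LinearMap.trace ℝ S (G' g ε s * E) • G g s) := by
  classical
  have h2k : (2 : ℝ) ^ k ≠ 0 := by positivity
  have horthog : ∀ s t : Finset (Fin d), s.card ≤ k → t.card ≤ k →
      LinearMap.trace ℝ S (G' g ε t * G g s) = if s = t then (2 : ℝ) ^ k else 0 := by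
    intro s t hs ht
    by_cases hst : s = t
    · subst hst
      rw [if_pos rfl, G'_mul_G_self hR, LinearMap.trace_one, hS]
      push_cast
      ring
    · obtain ⟨c, hc, hGG⟩ := G'_mul_G hR t s
      rw [if_neg hst, hGG, map_smul, trace_G_eq_zero hR ?_ ?_, smul_zero]
      · intro habs
        exact hst (symmDiff_eq_bot.1 (show symmDiff s t = ⊥ by rw [Finset.bot_eq_empty]; exact habs))
      · intro habs
        have hcard := congrArg Finset.card habs
        rw [Finset.card_univ, Fintype.card_fin] at hcard
        have hsub : symmDiff s t ⊆ s ∪ t := by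
          intro x hx
          rw [Finset.mem_symmDiff] at hx
          rw [Finset.mem_union]
          tauto
        have hle : (symmDiff s t).card ≤ s.card + t.card :=
          le_trans (Finset.card_le_card hsub) (Finset.card_union_le s t)
        omega
  have hindep : LinearIndependent ℝ
      (fun s : {s : Finset (Fin d) // s.card ≤ k} => G g s.1) := by
    rw [Fintype.linearIndependent_iff]
    intro c hc t
    have h1 : LinearMap.trace ℝ S (G' g ε t.1 * ∑ s, c s • G g s.1) = 0 := by
      rw [hc, mul_zero, map_zero]
    rw [Finset.mul_sum, map_sum] at h1
    have h2 : ∀ s : {s : Finset (Fin d) // s.card ≤ k},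
        LinearMap.trace ℝ S (G' g ε t.1 * (c s • G g s.1))
          = c s * (if s.1 = t.1 then (2 : ℝ) ^ k else 0) := by
      intro s
      rw [mul_smul_comm, map_smul, horthog s.1 t.1 s.2 t.2, smul_eq_mul]
    rw [Finset.sum_congr rfl (fun s _ => h2 s)] at h1
    rw [Finset.sum_eq_single t] at h1
    · rw [if_pos rfl] at h1
      rcases mul_eq_zero.1 h1 with hcc | hcc
      · exact hcc
      · exact absurd hcc h2k
    · intro s _ hst
      rw [if_neg (fun hh => hst (Subtype.ext hh)), mul_zero]
    · intro hmem
      exact absurd (Finset.mem_univ t) hmem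
  haveI : Nonempty {s : Finset (Fin d) // s.card ≤ k} := ⟨⟨∅, by simp⟩⟩
  have hcard : Fintype.card {s : Finset (Fin d) // s.card ≤ k}
      = Module.finrank ℝ (Module.End ℝ S) := by
    rw [Fintype.card_subtype]
    have hfib : (Finset.univ.filter (fun s : Finset (Fin d) => s.card ≤ k)).card
        = ∑ m ∈ Finset.range (k + 1),
          ((Finset.univ.filter (fun s : Finset (Fin d) => s.card ≤ k)).filter
            (fun s => s.card = m)).card := by
      apply Finset.card_eq_sum_card_fiberwise
      intro s hs
      rw [Finset.mem_coe, Finset.mem_filter] at hs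
      rw [Finset.mem_coe, Finset.mem_range]
      omega
    have hstep : ∀ m ∈ Finset.range (k + 1),
        ((Finset.univ.filter (fun s : Finset (Fin d) => s.card ≤ k)).filter
          (fun s => s.card = m)).card = d.choose m := by
      intro m hm
      rw [Finset.mem_range] at hm
      rw [Finset.filter_filter]
      have heqf : (Finset.univ.filter fun s : Finset (Fin d) => s.card ≤ k ∧ s.card = m)
          = Finset.powersetCard m Finset.univ := by
        rw [Finset.powersetCard_eq_filter, Finset.powerset_univ]
        apply Finset.filter_congr
        intro s _
        constructor
        · rintro ⟨_, hm'⟩; exact hm'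
        · intro hm'; exact ⟨by omega, hm'⟩
      rw [heqf, Finset.card_powersetCard, Finset.card_univ, Fintype.card_fin]
    have hEnd : Module.finrank ℝ (Module.End ℝ S) = 2 ^ k * 2 ^ k := by
      rw [Module.finrank_linearMap, hS]
    rw [hfib, Finset.sum_congr rfl hstep, hEnd, hd]
    have hhalf := Nat.sum_range_choose_halfway k
    rw [hhalf, ← pow_add, show (4 : ℕ) = 2 ^ 2 from rfl, ← pow_mul]
    congr 1
    omega
  have hspan : Submodule.span ℝ
      (Set.range fun s : {s : Finset (Fin d) // s.card ≤ k} => G g s.1) = ⊤ :=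
    hindep.span_eq_top_of_card_eq_finrank hcard
  set T : Module.End ℝ S →ₗ[ℝ] Module.End ℝ S :=
    (2 ^ k : ℝ)⁻¹ • ∑ s ∈ Finset.univ.filter (fun s : Finset (Fin d) => s.card ≤ k),
      (LinearMap.smulRight ((LinearMap.trace ℝ S).comp (LinearMap.mulLeft ℝ (G' g ε s)))
        (G g s)) with hTdef
  have hTapply : ∀ F : Module.End ℝ S, T F = (2 ^ k : ℝ)⁻¹ •
      ∑ s ∈ Finset.univ.filter (fun s : Finset (Fin d) => s.card ≤ k),
        LinearMap.trace ℝ S (G' g ε s * F) • G g s := by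
    intro F
    rw [hTdef]
    simp [LinearMap.sum_apply]
  have hTid : ∀ F, T F = F := by
    have hT : T = LinearMap.id := by
      apply LinearMap.ext_on hspan
      rintro x ⟨t, rfl⟩
      rw [hTapply]
      rw [Finset.sum_congr rfl (fun s hs =>
        by rw [horthog t.1 s t.2 (Finset.mem_filter.1 hs).2])]
      rw [Finset.sum_eq_single t.1]
      · rw [if_pos rfl, smul_smul, inv_mul_cancel₀ h2k, one_smul, LinearMap.id_apply]
      · intro s _ hst
        rw [if_neg (fun hh => hst hh.symm), zero_smul]
      · intro hmem
        exact absurd (Finset.mem_filter.2 ⟨Finset.mem_univ t.1, t.2⟩) hmem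
    intro F
    rw [hT, LinearMap.id_apply]
  have hsplit : Finset.univ.filter (fun s : Finset (Fin d) => s.card ≤ k)
      = insert ∅ (Finset.univ.filter (fun s : Finset (Fin d) => 1 ≤ s.card ∧ s.card ≤ k)) := by
    ext s
    simp only [Finset.mem_filter, Finset.mem_insert, Finset.mem_univ, true_and]
    constructor
    · intro hs
      by_cases h0 : s = ∅
      · exact Or.inl h0
      · exact Or.inr ⟨Nat.one_le_iff_ne_zero.2 (fun hc => h0 (Finset.card_eq_zero.1 hc)), hs⟩
    · rintro (rfl | ⟨_, hs⟩)
      · simp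
      · exact hs
  have hnot : (∅ : Finset (Fin d)) ∉
      Finset.univ.filter (fun s : Finset (Fin d) => 1 ≤ s.card ∧ s.card ≤ k) := by
    simp
  have hmain := hTid E
  rw [hTapply, hsplit, Finset.sum_insert hnot] at hmain
  have hG'empty : G' g ε (∅ : Finset (Fin d)) = 1 := by
    simp [G', Finset.sort_empty]
  rw [hG'empty, one_mul, G_empty] at hmain
  exact hmain.symm

end Trace

end GammaProductsAux

open CliffordAlgebra GammaProductsAux in
/-- For an irreducible real Clifford module `(S, γ)` in signature
`p - q ≡ 1 (mod 8)` and an orthonormal basis `(e¹,…,e^d)`: each `γ(eⁱ)` is invertible with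
inverse `h(eⁱ) • γ(eⁱ)`, and every endomorphism `E` of `S` expands as
`E = 2^{-k} (Tr(E)·id + ∑_{1 ≤ m ≤ k} ∑_{i₁<⋯<i_m} Tr(γ(e^{i_m})⁻¹ ⋯ γ(e^{i₁})⁻¹ E) ·
γ(e^{i₁}) ⋯ γ(e^{i_m}))`. -/
theorem gamma_products_expansion
    {V : Type*} [AddCommGroup V] [Module ℝ V]
    (h : QuadraticForm ℝ V) (d p q k : ℕ)
    (hd : d = p + q)
    (hsig : (p : ℤ) - (q : ℤ) ≡ 1 [ZMOD 8])
    (hk : d = 2 * k + 1)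
    {S : Type*} [AddCommGroup S] [Module ℝ S] [FiniteDimensional ℝ S]
    (hS : Module.finrank ℝ S = 2 ^ k)
    (γ : CliffordAlgebra h →ₐ[ℝ] Module.End ℝ S)
    (hγ : Function.Surjective γ)
    (e : Module.Basis (Fin d) ℝ V)
    (horth : ∀ i j : Fin d, i ≠ j → QuadraticMap.polar h (e i) (e j) = 0)
    (hpos : ∀ i : Fin d, (i : ℕ) < p → h (e i) = 1)
    (hneg : ∀ i : Fin d, p ≤ (i : ℕ) → h (e i) = -1) :
    (∀ i : Fin d,
        γ (ι h (e i)) * (h (e i) • γ (ι h (e i))) = 1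
        ∧ (h (e i) • γ (ι h (e i))) * γ (ι h (e i)) = 1)
    ∧ ∀ E : Module.End ℝ S,
        E = (2 ^ k : ℝ)⁻¹ •
          ((LinearMap.trace ℝ S E) • (1 : Module.End ℝ S)
            + ∑ s ∈ Finset.univ.filter
                (fun s : Finset (Fin d) => 1 ≤ s.card ∧ s.card ≤ k),
              LinearMap.trace ℝ S
                  ((((s.sort (· ≤ ·)).reverse.map fun i => h (e i) • γ (ι h (e i))).prod) * E)
                • ((s.sort (· ≤ ·)).map fun i => γ (ι h (e i))).prod) := by
  classical
  let g : Fin d → Module.End ℝ S := fun i => γ (ι h (e i))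
  let ε : Fin d → ℝ := fun i => h (e i)
  have hunit : ∀ i, ε i * ε i = 1 := by
    intro i
    show h (e i) * h (e i) = 1
    by_cases hi : (i : ℕ) < p
    · rw [hpos i hi]; norm_num
    · rw [hneg i (le_of_not_gt hi)]; norm_num
  have hsq : ∀ i, g i * g i = ε i • (1 : Module.End ℝ S) := by
    intro i
    show γ (ι h (e i)) * γ (ι h (e i)) = h (e i) • (1 : Module.End ℝ S)
    rw [← map_mul, ι_sq_scalar, AlgHom.commutes, Algebra.algebraMap_eq_smul_one]
  have hanti : ∀ i j : Fin d, i ≠ j → g i * g j = -(g j * g i) := by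
    intro i j hij
    show γ (ι h (e i)) * γ (ι h (e j)) = -(γ (ι h (e j)) * γ (ι h (e i)))
    have h0 : ι h (e i) * ι h (e j) + ι h (e j) * ι h (e i) = 0 := by
      rw [ι_mul_ι_add_swap, horth i j hij, map_zero]
    have h2 := congrArg γ h0
    rw [map_add, map_mul, map_mul, map_zero] at h2
    exact eq_neg_of_add_eq_zero_left h2
  have hR : Rel g ε := ⟨hsq, hunit, hanti⟩
  constructor
  · intro i
    constructor
    · show g i * (ε i • g i) = 1
      rw [mul_smul_comm, hsq, smul_smul, hunit, one_smul]
    · show (ε i • g i) * g i = 1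
      rw [smul_mul_assoc, hsq, smul_smul, hunit, one_smul]
  · intro E
    exact expansion hR hk hS E
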